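/- arXiv:1708.08049 — 2 statements merged into one kernel-verified Lean document; each statement's English description precedes it below -/
import Mathlib

section
/- Suppose μ is a singular cardinal with cf(μ) = ω₁ and μ ≤ 2^ω, (μ_γ : γ < ω₁) is a strictly increasing sequence of regular cardinals with supremum μ, J is an ideal on ω₁ extending the ideal of bounded subsets of ω₁, and (g_α : α < μ⁺) is a sequence of functions g_α ∈ ∏_{γ<ω₁} μ_γ witnessing tcf(∏_{γ<ω₁} μ_γ, J) = μ⁺. Assume further that for every A ⊆ μ⁺ with |A| = ℵ₁ there exists δ < ω₁ such that |{g_α(γ) : α ∈ A, γ < δ}| = ℵ₁. Then 𝔤𝔭 ≠ μ. -/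
open Cardinal Set

universe u

/-- `C` is a club subset of the ordinal `δ`: it consists of ordinals below `δ`,
is unbounded in `δ`, and contains every limit ordinal `β < δ` with `sup (C ∩ β) = β`. -/
def IsClubIn (δ : Ordinal) (C : Set Ordinal) : Prop :=
  C ⊆ Set.Iio δ ∧ (∀ a < δ, ∃ b ∈ C, a ≤ b) ∧
    ∀ β < δ, Order.IsSuccLimit β → sSup (C ∩ Set.Iio β) = β → β ∈ C

/-- `A` is a set of ordinals of cardinality `c` (witnessed by a bijective
enumeration of `A` by the ordinals below `c.ord`). -/
def HasCard (A : Set Ordinal.{u}) (c : Cardinal.{u}) : Prop :=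
  ∃ e : Ordinal → Ordinal, Set.BijOn e (Set.Iio c.ord) A

/-- An ideal on the set of ordinals below `θ`. -/
structure IdealOn (θ : Ordinal) where
  sets : Set (Set Ordinal)
  subset_Iio : ∀ A ∈ sets, A ⊆ Set.Iio θ
  mem_of_subset : ∀ A ∈ sets, ∀ B ⊆ A, B ∈ sets
  union_mem : ∀ A ∈ sets, ∀ B ∈ sets, A ∪ B ∈ sets
  proper : Set.Iio θ ∉ sets

/-- `(f α : α < lam.ord)` is a `<_J`-increasing, `<_J`-cofinal sequence in the
product `∏_{i<θ} μs i`, witnessing `tcf (∏_{i<θ} μs i, J) = lam`. -/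
def IsTcfWitness (θ : Ordinal) (J : IdealOn θ) (μs : Ordinal → Cardinal)
    (lam : Cardinal) (f : Ordinal → Ordinal → Ordinal) : Prop :=
  (∀ α < lam.ord, ∀ i < θ, f α i < (μs i).ord) ∧
  (∀ α β, α < β → β < lam.ord → {i | i < θ ∧ f β i ≤ f α i} ∈ J.sets) ∧
  (∀ g : Ordinal → Ordinal, (∀ i < θ, g i < (μs i).ord) →
    ∃ α < lam.ord, {i | i < θ ∧ f α i ≤ g i} ∈ J.sets)

/-- The Galvin cardinal characteristic `𝔤𝔭`: the least cardinal `κ` such that every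
family `{C α : α < κ⁺}` of clubs of `ω₁` has a subfamily of size `ℵ₁`
whose intersection is a club of `ω₁`. -/
noncomputable def gp : Cardinal.{u} :=
  sInf {κ : Cardinal.{u} | ∀ C : Ordinal.{u} → Set Ordinal.{u},
    (∀ α < (Order.succ κ).ord, IsClubIn (Cardinal.aleph 1).ord (C α)) →
    ∃ b : Ordinal.{u} → Ordinal.{u},
      (∀ β < (Cardinal.aleph 1).ord, b β < (Order.succ κ).ord) ∧
      Set.InjOn b (Set.Iio (Cardinal.aleph 1).ord) ∧
      IsClubIn (Cardinal.aleph 1).ord (⋂ β ∈ Set.Iio (Cardinal.aleph 1).ord, C (b β))}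


private lemma omega1_isLimit : Order.IsSuccLimit ((Cardinal.aleph 1).ord) :=
  Cardinal.isSuccLimit_ord (Cardinal.aleph0_le_aleph 1)

private lemma sSup_inter_Iio {S : Set Ordinal.{u}} {β : Ordinal.{u}} :
    sSup (S ∩ Set.Iio β) = β ↔ ∀ z < β, ∃ y ∈ S, z < y ∧ y < β := by
  constructor
  · intro h z hz
    by_contra hc
    push_neg at hc
    have hub : z ∈ upperBounds (S ∩ Set.Iio β) := by
      rintro y ⟨hyS, hyβ⟩
      by_contra hyz
      push_neg at hyz
      exact absurd (hc y hyS hyz) (by simpa using hyβ)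
    have := csSup_le' hub
    rw [h] at this
    exact absurd this (not_le.mpr hz)
  · intro h
    apply le_antisymm
    · exact csSup_le' (fun y hy => le_of_lt hy.2)
    · by_contra hc
      push_neg at hc
      obtain ⟨y, hyS, hlt, hyβ⟩ := h _ hc
      have hbdd : BddAbove (S ∩ Set.Iio β) := ⟨β, fun x hx => le_of_lt hx.2⟩
      have : y ≤ sSup (S ∩ Set.Iio β) := le_csSup hbdd ⟨hyS, hyβ⟩
      exact absurd (lt_of_lt_of_le hlt this) (lt_irrefl _)

private lemma diag_club (D : Ordinal.{u} → Set Ordinal.{u})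
    (hD : ∀ γ < (Cardinal.aleph 1).ord, IsClubIn (Cardinal.aleph 1).ord (D γ)) :
    IsClubIn (Cardinal.aleph 1).ord
      {β | β < (Cardinal.aleph 1).ord ∧ ∀ γ < β, β ∈ D γ} := by
  set ω₁ := (Cardinal.aleph 1).ord with hω₁
  have hcof : ω₁.cof = Cardinal.aleph 1 := Cardinal.isRegular_aleph_one.cof_eq
  refine ⟨fun β hβ => hβ.1, ?_, ?_⟩
  · -- unbounded
    intro a ha
    -- choice of elements of clubs
    have hel : ∀ γ x, γ < ω₁ → x < ω₁ → ∃ y, y ∈ D γ ∧ x ≤ y := by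
      intro γ x hγ hx
      obtain ⟨y, hy1, hy2⟩ := (hD γ hγ).2.1 x hx
      exact ⟨y, hy1, hy2⟩
    classical
    set el : Ordinal.{u} → Ordinal.{u} → Ordinal.{u} := fun γ x =>
      if h : γ < ω₁ ∧ x < ω₁ then Classical.choose (hel γ x h.1 h.2) else 0 with hel_def
    have helP : ∀ γ x, γ < ω₁ → x < ω₁ → el γ x ∈ D γ ∧ x ≤ el γ x := by
      intro γ x hγ hx
      have := Classical.choose_spec (hel γ x hγ hx)
      simpa [hel_def, hγ, hx] using this
    -- step function
    set step : Ordinal.{u} → Ordinal.{u} := fun x =>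
      max (x + 1) (Ordinal.bsup x (fun γ _ => el γ (x + 1))) with hstep_def
    have hxlt1 : ∀ x : Ordinal.{u}, x < x + 1 := fun x => by
      rw [Ordinal.add_one_eq_succ]; exact Order.lt_succ x
    have hx1 : ∀ x, x < ω₁ → x + 1 < ω₁ := by
      intro x hx
      rw [Ordinal.add_one_eq_succ]
      exact omega1_isLimit.succ_lt hx
    have hstep_lt : ∀ x, x < ω₁ → step x < ω₁ := by
      intro x hx
      apply max_lt (hx1 x hx)
      apply Ordinal.bsup_lt_ord
      · rw [hcof]; exact Cardinal.lt_ord.mp hx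
      · intro γ hγ
        exact (hD γ (lt_trans hγ hx)).1 (helP γ (x+1) (lt_trans hγ hx) (hx1 x hx)).1
    have hstep_gt : ∀ x, x < step x := fun x =>
      lt_of_lt_of_le (hxlt1 x) (le_max_left _ _)
    have hstep_mem : ∀ x γ, x < ω₁ → γ < x →
        el γ (x+1) ∈ D γ ∧ x < el γ (x+1) ∧ el γ (x+1) ≤ step x := by
      intro x γ hx hγ
      obtain ⟨h1, h2⟩ := helP γ (x+1) (lt_trans hγ hx) (hx1 x hx)
      refine ⟨h1, lt_of_lt_of_le (hxlt1 x) h2, ?_⟩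
      exact le_trans (Ordinal.le_bsup (fun γ _ => el γ (x+1)) γ hγ) (le_max_right _ _)
    -- the ω-sequence
    set β : ℕ → Ordinal.{u} := fun n => Nat.rec a (fun _ ih => step ih) n with hβ_def
    have hβ_succ : ∀ n, β (n+1) = step (β n) := fun n => rfl
    have hβ_lt : ∀ n, β n < ω₁ := by
      intro n; induction n with
      | zero => exact ha
      | succ n ih => rw [hβ_succ]; exact hstep_lt _ ih
    have hβ_mono : ∀ n, β n < β (n+1) := fun n => by rw [hβ_succ]; exact hstep_gt _
    have hβ_mono' : ∀ m n, m < n → β m < β n := by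
      intro m n h
      induction n with
      | zero => omega
      | succ n ih =>
        rcases Nat.lt_succ_iff_lt_or_eq.mp h with h' | h'
        · exact lt_trans (ih h') (hβ_mono n)
        · subst h'; exact hβ_mono m
    set B : Ordinal.{u} := iSup β with hB_def
    have hBbdd : BddAbove (Set.range β) := Ordinal.bddAbove_range β
    have hβ_le_B : ∀ n, β n ≤ B := fun n => le_ciSup hBbdd n
    have hB_lt : B < ω₁ := by
      apply Ordinal.iSup_lt_ord_lift _ hβ_lt
      rw [hcof]
      simpa using Cardinal.aleph0_lt_aleph_one
    have hlt_B : ∀ z, z < B → ∃ n, z < β n := by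
      intro z hz
      by_contra hc
      push_neg at hc
      exact absurd (lt_of_lt_of_le hz (ciSup_le' hc)) (lt_irrefl z)
    have hB_lim : Order.IsSuccLimit B := by
      rw [Ordinal.isSuccLimit_iff]
      constructor
      · intro h0
        have := lt_of_le_of_lt (zero_le (a := a)) (lt_of_lt_of_le (hβ_mono 0) (hβ_le_B 1))
        rw [h0] at this
        exact absurd this (lt_irrefl _)
      · refine Order.isSuccPrelimit_of_succ_lt ?_
        intro z hz
        obtain ⟨n, hn⟩ := hlt_B z hz
        calc Order.succ z ≤ β n := Order.succ_le_of_lt hn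
        _ < β (n+1) := hβ_mono n
        _ ≤ B := hβ_le_B (n+1)
    refine ⟨B, ⟨hB_lt, ?_⟩, le_trans (hβ_le_B 0) (le_refl B)⟩
    intro γ hγB
    obtain ⟨n, hn⟩ := hlt_B γ hγB
    have hγω : γ < ω₁ := lt_trans hγB hB_lt
    apply (hD γ hγω).2.2 B hB_lt hB_lim
    rw [sSup_inter_Iio]
    intro z hz
    obtain ⟨m, hm⟩ := hlt_B z hz
    have hβ_mono_le : ∀ m n : ℕ, m ≤ n → β m ≤ β n := by
      intro m n h
      rcases Nat.lt_or_ge m n with h' | h'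
      · exact le_of_lt (hβ_mono' m n h')
      · have : m = n := le_antisymm h h'
        subst this; exact le_refl _
    have hγk : γ < β (max n m) := lt_of_lt_of_le hn (hβ_mono_le n (max n m) (Nat.le_max_left n m))
    have hzk : z < β (max n m) := lt_of_lt_of_le hm (hβ_mono_le m _ (Nat.le_max_right n m))
    obtain ⟨h1, h2, h3⟩ := hstep_mem (β (max n m)) γ (hβ_lt _) hγk
    refine ⟨el γ (β (max n m) + 1), h1, lt_trans hzk h2, ?_⟩
    calc el γ (β (max n m) + 1) ≤ step (β (max n m)) := h3
      _ = β (max n m + 1) := (hβ_succ _).symm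
      _ < β (max n m + 2) := by
          have := hβ_mono (max n m + 1)
          simpa using this
      _ ≤ B := hβ_le_B (max n m + 2)
  · -- closed
    intro x hx hlim hsup
    refine ⟨hx, ?_⟩
    intro γ hγ
    apply (hD γ (lt_trans hγ hx)).2.2 x hx hlim
    rw [sSup_inter_Iio]
    intro z hz
    obtain ⟨y, hyS, hy1, hy2⟩ := sSup_inter_Iio.mp hsup (max z γ) (max_lt hz hγ)
    refine ⟨y, hyS.2 γ (lt_of_le_of_lt (le_max_right z γ) hy1), lt_of_le_of_lt (le_max_left z γ) hy1, hy2⟩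

private lemma mk_Iio_omega1 :
    #(Set.Iio ((Cardinal.aleph 1).ord : Ordinal.{u})) = Cardinal.aleph 1 := by
  rw [Ordinal.mk_Iio_ordinal, Cardinal.card_ord, Cardinal.lift_aleph, Ordinal.lift_one]

private lemma mk_Iio_lt_omega1 {δ : Ordinal.{u}} (h : δ < (Cardinal.aleph 1).ord) :
    #(Set.Iio δ) < Cardinal.aleph 1 := by
  rw [Ordinal.mk_Iio_ordinal]
  calc Cardinal.lift.{u+1} δ.card < Cardinal.lift.{u+1} (Cardinal.aleph 1) :=
        Cardinal.lift_lt.mpr (Cardinal.lt_ord.mp h)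
    _ = Cardinal.aleph 1 := by rw [Cardinal.lift_aleph, Ordinal.lift_one]

/-- If `μ` is a singular cardinal with `cf μ = ω₁` and `μ ≤ 2^ω`,
`(μs γ : γ < ω₁)` is a strictly increasing sequence of regular cardinals with supremum `μ`,
`J` is an ideal on `ω₁` extending the ideal of bounded sets, `g` witnesses
`tcf (∏_{γ<ω₁} μs γ, J) = μ⁺`, and every `A ⊆ μ⁺` of size `ℵ₁` admits `δ < ω₁` with
`|{g α γ : α ∈ A, γ < δ}| = ℵ₁`, then `𝔤𝔭 ≠ μ`. -/
theorem gp_ne_of_scale_omega1 (μ : Cardinal.{u}) (μs : Ordinal.{u} → Cardinal.{u})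
    (J : IdealOn (Cardinal.aleph 1).ord) (g : Ordinal.{u} → Ordinal.{u} → Ordinal.{u})
    (hcof : μ.ord.cof = Cardinal.aleph 1)
    (hsing : Cardinal.aleph 1 < μ)
    (hcont : μ ≤ 2 ^ Cardinal.aleph0)
    (hreg : ∀ γ < (Cardinal.aleph 1).ord, (μs γ).IsRegular)
    (hmono : ∀ γ δ, γ < δ → δ < (Cardinal.aleph 1).ord → μs γ < μs δ)
    (hsup : sSup (μs '' Set.Iio (Cardinal.aleph 1).ord) = μ)
    (hJ : ∀ δ < (Cardinal.aleph 1).ord, Set.Iio δ ∈ J.sets)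
    (hg : IsTcfWitness (Cardinal.aleph 1).ord J μs (Order.succ μ) g)
    (hA : ∀ A : Set Ordinal.{u}, A ⊆ Set.Iio (Order.succ μ).ord →
      HasCard A (Cardinal.aleph 1) →
      ∃ δ < (Cardinal.aleph 1).ord,
        HasCard {x : Ordinal | ∃ α ∈ A, ∃ γ < δ, g α γ = x} (Cardinal.aleph 1)) :
    gp ≠ μ := by
  classical
  intro hEq
  set S : Set Cardinal.{u} := {κ : Cardinal.{u} | ∀ C : Ordinal.{u} → Set Ordinal.{u},
    (∀ α < (Order.succ κ).ord, IsClubIn (Cardinal.aleph 1).ord (C α)) →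
    ∃ b : Ordinal.{u} → Ordinal.{u},
      (∀ β < (Cardinal.aleph 1).ord, b β < (Order.succ κ).ord) ∧
      Set.InjOn b (Set.Iio (Cardinal.aleph 1).ord) ∧
      IsClubIn (Cardinal.aleph 1).ord
        (⋂ β ∈ Set.Iio (Cardinal.aleph 1).ord, C (b β))} with hS_def
  have hgpS : gp.{u} = sInf S := rfl
  -- S is nonempty
  by_cases hS : S.Nonempty
  swap
  · rw [Set.not_nonempty_iff_eq_empty] at hS
    rw [hgpS, hS, Cardinal.sInf_empty] at hEq
    rw [← hEq] at hsing
    exact (Cardinal.zero_le _).not_gt hsing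
  · have hμS : μ ∈ S := by
      have := csInf_mem hS
      rwa [← hgpS, hEq] at this
    -- every cardinal below μ is not in S
    have hnotS : ∀ κ : Cardinal.{u}, κ < μ → κ ∉ S := by
      intro κ hκ hκS
      have : sInf S ≤ κ := csInf_le (OrderBot.bddBelow S) hκS
      rw [← hgpS, hEq] at this
      exact absurd (lt_of_le_of_lt this hκ) (lt_irrefl μ)
    -- each μs γ is < μ
    have hμs_lt : ∀ γ, γ < (Cardinal.aleph 1).ord → μs γ < μ := by
      intro γ hγ
      have hγ1 : γ + 1 < (Cardinal.aleph 1).ord := by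
        rw [Ordinal.add_one_eq_succ]; exact omega1_isLimit.succ_lt hγ
      have hlt : γ < γ + 1 := by
        rw [Ordinal.add_one_eq_succ]; exact Order.lt_succ γ
      have h1 : μs γ < μs (γ + 1) := hmono γ (γ + 1) hlt hγ1
      have h2 : μs (γ + 1) ≤ μ := by
        rw [← hsup]
        by_cases hbdd : BddAbove (μs '' Set.Iio (Cardinal.aleph 1).ord)
        · exact le_csSup hbdd ⟨γ + 1, hγ1, rfl⟩
        · exfalso
          rw [csSup_of_not_bddAbove hbdd, csSup_empty] at hsup
          rw [← hsup] at hsing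
          exact (Cardinal.zero_le _).not_gt hsing
      exact lt_of_lt_of_le h1 h2
    -- failure families
    have hfail : ∀ γ : Ordinal.{u}, ∃ Cf : Ordinal.{u} → Set Ordinal.{u},
        γ < (Cardinal.aleph 1).ord →
        ((∀ α < (Order.succ (μs γ)).ord, IsClubIn (Cardinal.aleph 1).ord (Cf α)) ∧
        ¬∃ b : Ordinal.{u} → Ordinal.{u},
          (∀ β < (Cardinal.aleph 1).ord, b β < (Order.succ (μs γ)).ord) ∧
          Set.InjOn b (Set.Iio (Cardinal.aleph 1).ord) ∧
          IsClubIn (Cardinal.aleph 1).ord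
            (⋂ β ∈ Set.Iio (Cardinal.aleph 1).ord, Cf (b β))) := by
      intro γ
      by_cases hγ : γ < (Cardinal.aleph 1).ord
      · have h1 := hnotS (μs γ) (hμs_lt γ hγ)
        rw [hS_def, Set.mem_setOf_eq] at h1
        simp only [not_forall, Classical.not_imp] at h1
        obtain ⟨Cf, h2, h3⟩ := h1
        exact ⟨Cf, fun _ => ⟨h2, h3⟩⟩
      · exact ⟨fun _ => ∅, fun h => absurd h hγ⟩
    choose D hD using hfail
    -- the diagonal family
    set C : Ordinal.{u} → Set Ordinal.{u} := fun α =>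
      {x | x < (Cardinal.aleph 1).ord ∧ ∀ γ < x, x ∈ D γ (g α γ)} with hC_def
    have hCclub : ∀ α < (Order.succ μ).ord, IsClubIn (Cardinal.aleph 1).ord (C α) := by
      intro α hα
      apply diag_club
      intro γ hγ
      exact (hD γ hγ).1 (g α γ)
        (lt_trans (hg.1 α hα γ hγ) (Cardinal.ord_lt_ord.mpr (Order.lt_succ (μs γ))))
    obtain ⟨b, hb1, hb2, hb3⟩ := hμS C hCclub
    -- apply hA to the image of b
    set A : Set Ordinal.{u} := b '' Set.Iio (Cardinal.aleph 1).ord with hA_def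
    have hAsub : A ⊆ Set.Iio (Order.succ μ).ord := by
      rintro x ⟨β, hβ, rfl⟩
      exact hb1 β hβ
    obtain ⟨δ, hδ, e, he⟩ := hA A hAsub ⟨b, hb2.bijOn_image⟩
    set Wg : Ordinal.{u} → Set Ordinal.{u} := fun γ => (fun α => g α γ) '' A with hWg_def
    have hγ0 : ∃ γ₀, γ₀ < δ ∧ ¬ (Wg γ₀).Countable := by
      by_contra hc
      push_neg at hc
      have hWc : {x : Ordinal.{u} | ∃ α ∈ A, ∃ γ < δ, g α γ = x}.Countable := by
        have hsub : {x : Ordinal.{u} | ∃ α ∈ A, ∃ γ < δ, g α γ = x} ⊆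
            ⋃ γ ∈ Set.Iio δ, Wg γ := by
          rintro x ⟨α, hα, γ, hγ, rfl⟩
          exact Set.mem_biUnion hγ ⟨α, hα, rfl⟩
        have hIio : (Set.Iio δ).Countable :=
          (Cardinal.countable_iff_lt_aleph_one _).mpr (mk_Iio_lt_omega1 hδ)
        exact Set.Countable.mono hsub (hIio.biUnion (fun γ hγ => hc γ hγ))
      have h1 : #(Set.Iio ((Cardinal.aleph 1).ord : Ordinal.{u})) =
          #({x : Ordinal.{u} | ∃ α ∈ A, ∃ γ < δ, g α γ = x}) :=
        Cardinal.mk_congr (Set.BijOn.equiv e he)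
      rw [mk_Iio_omega1] at h1
      have h2 := (Cardinal.countable_iff_lt_aleph_one _).mp hWc
      rw [← h1] at h2
      exact (lt_irrefl _) h2
    obtain ⟨γ₀, hγ₀δ, hγ₀⟩ := hγ0
    have hγ₀ω : γ₀ < (Cardinal.aleph 1).ord := lt_trans hγ₀δ hδ
    have hle : #(Set.Iio ((Cardinal.aleph 1).ord : Ordinal.{u})) ≤ #(Wg γ₀) := by
      rw [mk_Iio_omega1]
      exact not_lt.mp (fun h => hγ₀ ((Cardinal.countable_iff_lt_aleph_one _).mpr h))
    obtain ⟨emb⟩ := (Cardinal.le_def _ _).mp hle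
    set b' : Ordinal.{u} → Ordinal.{u} := fun x =>
      if h : x < (Cardinal.aleph 1).ord then (emb ⟨x, h⟩ : Ordinal.{u}) else 0 with hb'_def
    have hb'eq : ∀ x (h : x < (Cardinal.aleph 1).ord),
        b' x = (emb ⟨x, h⟩ : Ordinal.{u}) := by
      intro x h
      simp only [hb'_def]
      exact dif_pos h
    have hb'mem : ∀ x, x < (Cardinal.aleph 1).ord → b' x ∈ Wg γ₀ := by
      intro x h
      rw [hb'eq x h]
      exact (emb ⟨x, h⟩).2
    have hb'lt : ∀ x, x < (Cardinal.aleph 1).ord → b' x < (Order.succ (μs γ₀)).ord := by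
      intro x h
      obtain ⟨α, hαA, hgx⟩ := hb'mem x h
      obtain ⟨z, hz, rfl⟩ := hαA
      rw [← hgx]
      exact lt_trans (hg.1 (b z) (hb1 z hz) γ₀ hγ₀ω)
        (Cardinal.ord_lt_ord.mpr (Order.lt_succ (μs γ₀)))
    have hb'inj : Set.InjOn b' (Set.Iio (Cardinal.aleph 1).ord) := by
      intro x hx y hy hxy
      rw [hb'eq x hx, hb'eq y hy] at hxy
      have := emb.injective (Subtype.coe_injective hxy)
      exact congrArg Subtype.val this
    have hkey : ∀ y, y ∈ (⋂ β ∈ Set.Iio (Cardinal.aleph 1).ord, C (b β)) → γ₀ < y →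
        ∀ x, x < (Cardinal.aleph 1).ord → y ∈ D γ₀ (b' x) := by
      intro y hyE hγ₀y x hx
      obtain ⟨α, hαA, hgx⟩ := hb'mem x hx
      obtain ⟨z, hz, rfl⟩ := hαA
      have hyC : y ∈ C (b z) := Set.mem_iInter₂.mp hyE z hz
      rw [← hgx]
      exact hyC.2 γ₀ hγ₀y
    apply (hD γ₀ hγ₀ω).2
    refine ⟨b', hb'lt, hb'inj, ?_, ?_, ?_⟩
    · -- subset
      have h0 : (0 : Ordinal.{u}) < (Cardinal.aleph 1).ord := omega1_isLimit.pos
      intro y hy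
      have : y ∈ D γ₀ (b' 0) := Set.mem_iInter₂.mp hy 0 h0
      exact ((hD γ₀ hγ₀ω).1 (b' 0) (hb'lt 0 h0)).1 this
    · -- unbounded
      intro a ha
      have hγ₀1 : γ₀ + 1 < (Cardinal.aleph 1).ord := by
        rw [Ordinal.add_one_eq_succ]; exact omega1_isLimit.succ_lt hγ₀ω
      have ha' : max a (γ₀ + 1) < (Cardinal.aleph 1).ord := max_lt ha hγ₀1
      obtain ⟨y, hyE, hy⟩ := hb3.2.1 (max a (γ₀ + 1)) ha'
      have hγ₀y : γ₀ < y := lt_of_lt_of_le (lt_of_lt_of_le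
        (by rw [Ordinal.add_one_eq_succ]; exact Order.lt_succ γ₀)
        (le_max_right a (γ₀ + 1))) hy
      refine ⟨y, ?_, le_trans (le_max_left a (γ₀ + 1)) hy⟩
      exact Set.mem_iInter₂.mpr (fun x hx => hkey y hyE hγ₀y x hx)
    · -- closed
      intro x hxω hlim hsupT
      refine Set.mem_iInter₂.mpr (fun z hz => ?_)
      apply ((hD γ₀ hγ₀ω).1 (b' z) (hb'lt z hz)).2.2 x hxω hlim
      rw [sSup_inter_Iio]
      intro w hw
      obtain ⟨y, hyT, hwy, hyx⟩ := sSup_inter_Iio.mp hsupT w hw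
      exact ⟨y, Set.mem_iInter₂.mp hyT z hz, hwy, hyx⟩
end

section
/- Assume ω = cf(μ) < μ < 2^ω, (μ_n : n < ω) is a strictly increasing sequence of regular cardinals with supremum μ, and there exists a good scale (f_α : α < μ⁺) witnessing tcf(∏_{n<ω} μ_n, J^bd_ω) = μ⁺, where J^bd_ω is the ideal of finite subsets of ω. Then 𝔤𝔭 ≠ μ. -/
open Cardinal Set

universe u

/-- The ideal `J^bd_θ` of bounded subsets of `θ` (for `θ = ω` this is the ideal
of finite subsets of `ω`). -/
def boundedIdeal (θ : Ordinal.{u}) : IdealOn θ where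
  sets := {A | ∃ δ < θ, A ⊆ Set.Iio δ}
  subset_Iio := by
    rintro A ⟨δ, hδ, hA⟩
    exact hA.trans fun x hx => lt_trans hx hδ
  mem_of_subset := by
    rintro A ⟨δ, hδ, hA⟩ B hB
    exact ⟨δ, hδ, hB.trans hA⟩
  union_mem := by
    rintro A ⟨δ₁, h₁, hA⟩ B ⟨δ₂, h₂, hB⟩
    refine ⟨max δ₁ δ₂, max_lt h₁ h₂, fun x hx => ?_⟩
    rcases hx with hx | hx
    · exact Set.mem_Iio.mpr (lt_of_lt_of_le (Set.mem_Iio.mp (hA hx)) (le_max_left _ _))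
    · exact Set.mem_Iio.mpr (lt_of_lt_of_le (Set.mem_Iio.mp (hB hx)) (le_max_right _ _))
  proper := by
    rintro ⟨δ, hδ, h⟩
    exact absurd (h hδ) (lt_irrefl δ)

/-- `γ` is a good point for the sequence `f` (with respect to `J^bd_ω`):
there are an unbounded `u ⊆ γ` and `n < ω` such that `α ↦ f α m` is strictly
increasing on `u` for every `m` with `n ≤ m < ω`. -/
def IsGoodPoint (f : Ordinal.{u} → Ordinal.{u} → Ordinal.{u}) (γ : Ordinal.{u}) : Prop :=
  ∃ v : Set Ordinal.{u}, v ⊆ Set.Iio γ ∧ (∀ β < γ, ∃ α ∈ v, β ≤ α) ∧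
    ∃ n < Ordinal.omega0, ∀ m, n ≤ m → m < Ordinal.omega0 →
      ∀ α ∈ v, ∀ β ∈ v, α < β → f α m < f β m

lemma sSup_inter_Iio_eq_of_subset {C X : Set Ordinal.{u}} {β : Ordinal.{u}}
    (hsub : X ⊆ C) (hβ : Order.IsSuccLimit β) (h : sSup (X ∩ Set.Iio β) = β) :
    sSup (C ∩ Set.Iio β) = β := by
  have hne : (X ∩ Set.Iio β).Nonempty := by
    rcases Set.eq_empty_or_nonempty (X ∩ Set.Iio β) with he | hne
    · rw [he, csSup_empty, Ordinal.bot_eq_zero] at h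
      exact absurd h.symm hβ.pos.ne'
    · exact hne
  apply le_antisymm
  · refine csSup_le (hne.mono (Set.inter_subset_inter_left _ hsub)) ?_
    exact fun x hx => hx.2.le
  · calc β = sSup (X ∩ Set.Iio β) := h.symm
      _ ≤ sSup (C ∩ Set.Iio β) := by
          refine csSup_le_csSup ⟨β, fun x hx => hx.2.le⟩ hne
            (Set.inter_subset_inter_left _ hsub)

lemma isClubIn_biInter_of_club_subset {δ : Ordinal.{u}} {I : Set Ordinal.{u}}
    (hne : I.Nonempty) {Cs : Ordinal.{u} → Set Ordinal.{u}}
    (hC : ∀ ρ ∈ I, IsClubIn δ (Cs ρ)) {K : Set Ordinal.{u}} (hK : IsClubIn δ K)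
    (hsub : ∀ ρ ∈ I, K ⊆ Cs ρ) : IsClubIn δ (⋂ ρ ∈ I, Cs ρ) := by
  obtain ⟨ρ₀, hρ₀⟩ := hne
  refine ⟨?_, ?_, ?_⟩
  · intro x hx
    exact (hC ρ₀ hρ₀).1 (Set.mem_iInter₂.1 hx ρ₀ hρ₀)
  · intro a ha
    obtain ⟨x, hx, hax⟩ := hK.2.1 a ha
    exact ⟨x, Set.mem_iInter₂.2 fun ρ hρ => hsub ρ hρ hx, hax⟩
  · intro β hβδ hβ hs
    refine Set.mem_iInter₂.2 fun ρ hρ => ?_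
    refine (hC ρ hρ).2.2 β hβδ hβ ?_
    exact sSup_inter_Iio_eq_of_subset (fun x hx => Set.mem_iInter₂.1 hx ρ hρ) hβ hs


lemma isClubIn_iInter_nat {E : ℕ → Set Ordinal.{u}}
    (hE : ∀ n, IsClubIn (Cardinal.aleph 1).ord (E n)) :
    IsClubIn (Cardinal.aleph 1).ord (⋂ n, E n) := by
  set W1 : Ordinal.{u} := (Cardinal.aleph 1).ord with hW1
  have hW1lim : Order.IsSuccLimit W1 := Cardinal.isSuccLimit_ord (Cardinal.aleph0_le_aleph 1)
  have hW1cof : W1.cof = Cardinal.aleph 1 := Cardinal.isRegular_aleph_one.cof_eq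
  refine ⟨?_, ?_, ?_⟩
  · intro x hx
    exact (hE 0).1 (Set.mem_iInter.1 hx 0)
  · -- unboundedness
    intro a ha
    have hch : ∀ (n : ℕ) (x : Ordinal.{u}), ∃ y,
        x < W1 → (y ∈ E n ∧ x ≤ y ∧ y < W1) := by
      intro n x
      by_cases hx : x < W1
      · obtain ⟨y, hy, hxy⟩ := (hE n).2.1 x hx
        exact ⟨y, fun _ => ⟨hy, hxy, (hE n).1 hy⟩⟩
      · exact ⟨0, fun h => absurd h hx⟩
    choose ch hch using hch
    set xs : ℕ → Ordinal.{u} :=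
      fun k => Nat.rec a (fun k ih => (Finset.range (k+1)).sup (fun n => ch n ih) + 1) k
      with hxs
    have hxs0 : xs 0 = a := rfl
    have hxssucc : ∀ k, xs (k+1) = (Finset.range (k+1)).sup (fun n => ch n (xs k)) + 1 :=
      fun k => rfl
    have hlt : ∀ k, xs k < W1 := by
      intro k
      induction k with
      | zero => exact ha
      | succ k ihk =>
        rw [hxssucc, Ordinal.add_one_eq_succ]
        refine hW1lim.succ_lt ?_
        refine Finset.sup_lt_iff ?_ |>.2 fun n _ => (hch n (xs k) ihk).2.2
        rw [Ordinal.bot_eq_zero]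
        exact hW1lim.pos
    have hmono : StrictMono xs := by
      refine strictMono_nat_of_lt_succ fun k => ?_
      have h1 : xs k ≤ ch 0 (xs k) := (hch 0 (xs k) (hlt k)).2.1
      have h2 : ch 0 (xs k) ≤ (Finset.range (k+1)).sup (fun n => ch n (xs k)) :=
        Finset.le_sup (f := fun n => ch n (xs k)) (Finset.mem_range.2 (Nat.succ_pos k))
      calc xs k ≤ (Finset.range (k+1)).sup (fun n => ch n (xs k)) := h1.trans h2
        _ < xs (k+1) := by rw [hxssucc, Ordinal.add_one_eq_succ]; exact Order.lt_succ _
    have hchmem : ∀ n k, n ≤ k → ch n (xs k) ∈ E n ∧ xs k ≤ ch n (xs k) ∧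
        ch n (xs k) < xs (k+1) := by
      intro n k hnk
      refine ⟨(hch n (xs k) (hlt k)).1, (hch n (xs k) (hlt k)).2.1, ?_⟩
      have : ch n (xs k) ≤ (Finset.range (k+1)).sup (fun m => ch m (xs k)) :=
        Finset.le_sup (f := fun m => ch m (xs k)) (Finset.mem_range.2 (Nat.lt_succ_of_le hnk))
      rw [hxssucc, Ordinal.add_one_eq_succ]
      exact this.trans_lt (Order.lt_succ _)
    set x' : Ordinal.{u} := ⨆ k, xs k with hx'
    have hbdd : BddAbove (Set.range xs) := Ordinal.bddAbove_range xs
    have hle : ∀ k, xs k ≤ x' := fun k => le_ciSup hbdd k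
    have hltx' : ∀ k, xs k < x' := fun k => (hmono (Nat.lt_succ_self k)).trans_le (hle (k+1))
    have hx'lt : x' < W1 := by
      refine Ordinal.iSup_lt_ord_lift ?_ hlt
      rw [Cardinal.mk_nat, Cardinal.lift_aleph0, hW1cof]
      exact Cardinal.aleph0_lt_aleph_one
    have hx'lim : Order.IsSuccLimit x' := by
      refine Ordinal.isSuccLimit_iff.2 ⟨?_, Order.isSuccPrelimit_of_succ_lt ?_⟩
      · intro h0
        exact absurd (h0 ▸ hltx' 0) (zero_le : (0 : Ordinal) ≤ a).not_gt
      · intro c hc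
        obtain ⟨k, hk⟩ := (lt_ciSup_iff hbdd).1 hc
        exact (Order.succ_le_of_lt hk).trans_lt ((hmono (Nat.lt_succ_self k)).trans_le
          (hle (k+1)))
    have hmem : ∀ n, x' ∈ E n := by
      intro n
      refine (hE n).2.2 x' hx'lt hx'lim ?_
      have hbd2 : BddAbove (E n ∩ Set.Iio x') := ⟨x', fun y hy => hy.2.le⟩
      apply le_antisymm
      · refine csSup_le ⟨ch n (xs n), (hchmem n n le_rfl).1,
          (hchmem n n le_rfl).2.2.trans_le (hle (n+1))⟩ fun y hy => hy.2.le
      · refine ciSup_le fun k => ?_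
        have hkK : xs k ≤ xs (max k n) := hmono.monotone (le_max_left k n)
        have hc := hchmem n (max k n) (le_max_right k n)
        refine (hkK.trans hc.2.1).trans (le_csSup hbd2 ?_)
        exact ⟨hc.1, hc.2.2.trans_le (hle (max k n + 1))⟩
    exact ⟨x', Set.mem_iInter.2 hmem, (hxs0 ▸ hltx' 0).le⟩
  · -- closedness
    intro β hβδ hβ hs
    refine Set.mem_iInter.2 fun n => ?_
    refine (hE n).2.2 β hβδ hβ ?_
    -- reuse sandwich
    have hsub : (⋂ m, E m) ⊆ E n := fun x hx => Set.mem_iInter.1 hx n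
    have hne : ((⋂ m, E m) ∩ Set.Iio β).Nonempty := by
      rcases Set.eq_empty_or_nonempty ((⋂ m, E m) ∩ Set.Iio β) with he | hne
      · rw [he, csSup_empty, Ordinal.bot_eq_zero] at hs
        exact absurd hs.symm hβ.pos.ne'
      · exact hne
    apply le_antisymm
    · exact csSup_le (hne.mono (Set.inter_subset_inter_left _ hsub)) fun x hx => hx.2.le
    · calc β = sSup ((⋂ m, E m) ∩ Set.Iio β) := hs.symm
        _ ≤ sSup (E n ∩ Set.Iio β) :=
          csSup_le_csSup ⟨β, fun x hx => hx.2.le⟩ hne (Set.inter_subset_inter_left _ hsub)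

noncomputable def seqU (W step : Ordinal.{u} → Ordinal.{u}) : Ordinal.{u} → Ordinal.{u} :=
  Ordinal.lt_wf.fix fun ξ ih => W (Ordinal.bsup ξ fun η hη => step (ih η hη))

lemma seqU_eq (W step : Ordinal.{u} → Ordinal.{u}) (ξ : Ordinal.{u}) :
    seqU W step ξ = W (Ordinal.bsup ξ fun η _ => step (seqU W step η)) := by
  rw [seqU, WellFounded.fix_eq]

/-- If `ω = cf μ < μ < 2^ω`, `(μs n : n < ω)` is a strictly increasing
sequence of regular cardinals with supremum `μ`, and there is a good scale
`(f α : α < μ⁺)` witnessing `tcf (∏_{n<ω} μs n, J^bd_ω) = μ⁺`, then `𝔤𝔭 ≠ μ`. -/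
theorem gp_ne_of_goodScale (μ : Cardinal.{u}) (μs : Ordinal.{u} → Cardinal.{u})
    (f : Ordinal.{u} → Ordinal.{u} → Ordinal.{u})
    (hcof : μ.ord.cof = Cardinal.aleph0)
    (hsing : Cardinal.aleph0 < μ)
    (hcont : μ < 2 ^ Cardinal.aleph0)
    (hreg : ∀ i < Ordinal.omega0, (μs i).IsRegular)
    (hmono : ∀ i j, i < j → j < Ordinal.omega0 → μs i < μs j)
    (hsup : sSup (μs '' Set.Iio Ordinal.omega0) = μ)
    (hf : IsTcfWitness Ordinal.omega0 (boundedIdeal Ordinal.omega0) μs (Order.succ μ) f)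
    (hgood : ∀ γ < (Order.succ μ).ord, Cardinal.aleph0 < γ.cof → IsGoodPoint f γ) :
    gp ≠ μ := by
  intro hgp
  unfold gp at hgp
  -- basic facts about ω₁
  set W1 : Ordinal.{u} := (Cardinal.aleph 1).ord with hW1def
  have hW1lim : Order.IsSuccLimit W1 := Cardinal.isSuccLimit_ord (Cardinal.aleph0_le_aleph 1)
  have hW1cof : W1.cof = Cardinal.aleph 1 := Cardinal.isRegular_aleph_one.cof_eq
  have hωlim := Ordinal.isSuccLimit_omega0
  have hμ0 : μ ≠ 0 := (Cardinal.aleph0_pos.trans hsing).ne'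
  -- each μs i is < μ
  have hbddμ : BddAbove (μs '' Set.Iio Ordinal.omega0) := by
    by_contra hb
    rw [csSup_of_not_bddAbove hb, csSup_empty] at hsup
    exact hμ0 (by rw [← hsup]; rfl)
  have hμslt : ∀ i < Ordinal.omega0, μs i < μ := by
    intro i hi
    have hisucc : i + 1 < Ordinal.omega0 := by
      rw [Ordinal.add_one_eq_succ]; exact hωlim.succ_lt hi
    have h1 : μs i < μs (i + 1) :=
      hmono i (i + 1) (by rw [Ordinal.add_one_eq_succ]; exact Order.lt_succ i) hisucc
    have h2 : μs (i + 1) ≤ μ := by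
      rw [← hsup]; exact le_csSup hbddμ ⟨i + 1, hisucc, rfl⟩
    exact h1.trans_le h2
  -- membership facts for the defining set of gp
  have hμS : μ ∈ {κ : Cardinal.{u} | ∀ C : Ordinal.{u} → Set Ordinal.{u},
      (∀ α < (Order.succ κ).ord, IsClubIn (Cardinal.aleph 1).ord (C α)) →
      ∃ b : Ordinal.{u} → Ordinal.{u},
        (∀ β < (Cardinal.aleph 1).ord, b β < (Order.succ κ).ord) ∧
        Set.InjOn b (Set.Iio (Cardinal.aleph 1).ord) ∧
        IsClubIn (Cardinal.aleph 1).ord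
          (⋂ β ∈ Set.Iio (Cardinal.aleph 1).ord, C (b β))} := by
    rcases Set.eq_empty_or_nonempty {κ : Cardinal.{u} | ∀ C : Ordinal.{u} → Set Ordinal.{u},
      (∀ α < (Order.succ κ).ord, IsClubIn (Cardinal.aleph 1).ord (C α)) →
      ∃ b : Ordinal.{u} → Ordinal.{u},
        (∀ β < (Cardinal.aleph 1).ord, b β < (Order.succ κ).ord) ∧
        Set.InjOn b (Set.Iio (Cardinal.aleph 1).ord) ∧
        IsClubIn (Cardinal.aleph 1).ord
          (⋂ β ∈ Set.Iio (Cardinal.aleph 1).ord, C (b β))} with he | hne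
    · rw [he, Cardinal.sInf_empty] at hgp
      exact absurd hgp.symm hμ0
    · have := csInf_mem hne
      rwa [hgp] at this
  have hnotS : ∀ i < Ordinal.omega0,
      μs i ∉ {κ : Cardinal.{u} | ∀ C : Ordinal.{u} → Set Ordinal.{u},
      (∀ α < (Order.succ κ).ord, IsClubIn (Cardinal.aleph 1).ord (C α)) →
      ∃ b : Ordinal.{u} → Ordinal.{u},
        (∀ β < (Cardinal.aleph 1).ord, b β < (Order.succ κ).ord) ∧
        Set.InjOn b (Set.Iio (Cardinal.aleph 1).ord) ∧
        IsClubIn (Cardinal.aleph 1).ord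
          (⋂ β ∈ Set.Iio (Cardinal.aleph 1).ord, C (b β))} := by
    intro i hi hmem
    have hle := csInf_le (OrderBot.bddBelow _) hmem
    rw [hgp] at hle
    exact absurd hle (hμslt i hi).not_ge
  -- counterexample families below μ
  have hCex : ∀ i : Ordinal.{u}, ∃ Cf : Ordinal.{u} → Set Ordinal.{u},
      i < Ordinal.omega0 →
        ((∀ α < (Order.succ (μs i)).ord, IsClubIn W1 (Cf α)) ∧
          ¬∃ b' : Ordinal.{u} → Ordinal.{u},
            (∀ β < W1, b' β < (Order.succ (μs i)).ord) ∧
            Set.InjOn b' (Set.Iio W1) ∧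
            IsClubIn W1 (⋂ β ∈ Set.Iio W1, Cf (b' β))) := by
    intro i
    by_cases hi : i < Ordinal.omega0
    · by_contra hno
      apply hnotS i hi
      intro C hC
      by_contra hnb
      exact hno ⟨C, fun _ => ⟨hC, hnb⟩⟩
    · exact ⟨fun _ => ∅, fun h => absurd h hi⟩
  choose Cfam hCfam using hCex
  -- the derived family of clubs indexed by μ⁺
  set D : Ordinal.{u} → Set Ordinal.{u} :=
    fun α => ⋂ i ∈ Set.Iio Ordinal.omega0, Cfam i (f α i) with hDdef
  have hDeq : ∀ α, D α = ⋂ n : ℕ, Cfam (n : Ordinal) (f α (n : Ordinal)) := by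
    intro α
    ext x
    simp only [hDdef, Set.mem_iInter, Set.mem_Iio]
    constructor
    · intro h n
      exact h (n : Ordinal) (Ordinal.nat_lt_omega0 n)
    · intro h i hi
      obtain ⟨n, rfl⟩ := Ordinal.lt_omega0.1 hi
      exact h n
  have hford : ∀ α, α < (Order.succ μ).ord → ∀ i, i < Ordinal.omega0 →
      f α i < (Order.succ (μs i)).ord := fun α hα i hi =>
    (hf.1 α hα i hi).trans (Cardinal.ord_lt_ord.2 (Order.lt_succ _))
  have hDclub : ∀ α < (Order.succ μ).ord, IsClubIn W1 (D α) := by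
    intro α hα
    rw [hDeq]
    rw [hW1def]
    exact isClubIn_iInter_nat fun n =>
      (hCfam (n : Ordinal) (Ordinal.nat_lt_omega0 n)).1 _
        (hford α hα (n : Ordinal) (Ordinal.nat_lt_omega0 n))
  obtain ⟨b, hb1, hb2, hb3⟩ := hμS D hDclub
  -- enumerate the range of b in increasing order
  set bimage : Set Ordinal.{u} := b '' Set.Iio W1 with hbimdef
  have hbimlt : ∀ x ∈ bimage, x < (Order.succ μ).ord := by
    rintro x ⟨β, hβ, rfl⟩
    exact hb1 β hβ
  set sset : Set Ordinal.{u} := bimage ∪ Set.Ici (Order.succ μ).ord with hssetdef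
  have hsunb : ¬ BddAbove sset := by
    rintro ⟨x, hx⟩
    have hlt1 : max x (Order.succ μ).ord < max x (Order.succ μ).ord + 1 := by
      rw [Ordinal.add_one_eq_succ]; exact Order.lt_succ _
    have hmem : max x (Order.succ μ).ord + 1 ∈ sset :=
      Or.inr (((le_max_right _ _).trans_lt hlt1).le)
    exact absurd (hx hmem) ((le_max_left x _).trans_lt hlt1).not_ge
  set g : Ordinal.{u} → Ordinal.{u} := Ordinal.enumOrd sset with hgdef
  have hgmono : StrictMono g := Ordinal.enumOrd_strictMono hsunb
  have hIiocard : #(Set.Iio W1) = Cardinal.lift.{u+1, u} (Cardinal.aleph 1) := by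
    rw [Ordinal.mk_Iio_ordinal, hW1def, Cardinal.card_ord]
  have hgb : ∀ ξ < W1, g ξ ∈ bimage := by
    intro ξ hξ
    rcases (Ordinal.enumOrd_mem hsunb ξ : g ξ ∈ sset) with hmem | hmem
    · exact hmem
    · exfalso
      have himg : bimage ⊆ g '' Set.Iio ξ := by
        intro a ha
        have has : a ∈ sset := Or.inl ha
        obtain ⟨η, hη⟩ := Ordinal.enumOrd_surjective hsunb has
        refine ⟨η, ?_, hη⟩
        have hlt : g η < g ξ := by
          rw [hgdef, hη]
          exact (hbimlt a ha).trans_le hmem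
        exact hgmono.lt_iff_lt.1 hlt
      have h1 : #bimage = #(Set.Iio W1) := Cardinal.mk_image_eq_of_injOn b _ hb2
      have h2 : #(g '' Set.Iio ξ) ≤ #(Set.Iio ξ) := Cardinal.mk_image_le
      have h3 : #(Set.Iio ξ) = Cardinal.lift.{u+1, u} ξ.card := Ordinal.mk_Iio_ordinal ξ
      have h4 : ξ.card < Cardinal.aleph 1 := Cardinal.lt_ord.1 (hW1def ▸ hξ)
      have h5 := (Cardinal.mk_le_mk_of_subset himg).trans h2
      rw [h1, hIiocard, h3] at h5
      exact absurd (Cardinal.lift_le.1 h5) h4.not_ge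
  -- the supremum γ of the increasing enumeration
  set γ : Ordinal.{u} := Ordinal.bsup.{u,u} W1 (fun ξ _ => g ξ) with hγdef
  have hgγ : ∀ ξ < W1, g ξ < γ := by
    intro ξ hξ
    exact (hgmono (Order.lt_succ ξ)).trans_le
      (Ordinal.le_bsup _ (Order.succ ξ) (hW1lim.succ_lt hξ))
  have hℵ1μ : Cardinal.aleph 1 < Order.succ μ := by
    have h1 : Cardinal.aleph 1 ≤ μ := by
      rw [← Cardinal.succ_aleph0]
      exact Order.succ_le_of_lt hsing
    exact h1.trans_lt (Order.lt_succ μ)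
  have hsuccreg : (Order.succ μ).IsRegular := Cardinal.isRegular_succ hsing.le
  have hγlt : γ < (Order.succ μ).ord := by
    refine Ordinal.bsup_lt_ord ?_ ?_
    · rw [hW1def, Cardinal.card_ord, hsuccreg.cof_eq]
      exact hℵ1μ
    · intro ξ hξ
      exact hbimlt _ (hgb ξ hξ)
  have hγlim : Order.IsSuccLimit γ := by
    refine Ordinal.isSuccLimit_iff.2 ⟨?_, Order.isSuccPrelimit_of_succ_lt ?_⟩
    · intro h0
      have := hgγ 0 hW1lim.pos
      rw [h0] at this
      exact zero_le.not_gt this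
    · intro c hc
      obtain ⟨ξ, hξ, hlt⟩ := (Ordinal.lt_bsup _).1 hc
      exact (Order.succ_le_of_lt hlt).trans_lt (hgγ ξ hξ)
  have hγcof : Cardinal.aleph0 < γ.cof := by
    by_contra hle
    push_neg at hle
    obtain ⟨ι, F, hlsub, hmk⟩ := Ordinal.exists_lsub_cof γ
    have hmkle : #ι ≤ Cardinal.aleph0 := by rw [hmk]; exact hle
    have hFlt : ∀ i, F i < γ := fun i => by
      rw [← hlsub]; exact Ordinal.lt_lsub F i
    have hex : ∀ i, ∃ ξ, ξ < W1 ∧ F i < g ξ := by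
      intro i
      obtain ⟨ξ, hξ, h⟩ := (Ordinal.lt_bsup _).1 (hFlt i)
      exact ⟨ξ, hξ, h⟩
    choose ξf hξf1 hξf2 using hex
    have hξs : (⨆ i, ξf i) < W1 := by
      refine Ordinal.iSup_lt_ord ?_ hξf1
      rw [hW1cof]
      exact hmkle.trans_lt Cardinal.aleph0_lt_aleph_one
    have hγle : γ ≤ Order.succ (g (⨆ i, ξf i)) := by
      rw [← hlsub]
      refine Ordinal.lsub_le fun i => ?_
      exact (hξf2 i).trans_le
        ((hgmono.monotone (Ordinal.le_iSup ξf i)).trans (Order.lt_succ _).le)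
    have h2 : Order.succ (g (⨆ i, ξf i)) ≤ g (Order.succ (⨆ i, ξf i)) :=
      Order.succ_le_of_lt (hgmono (Order.lt_succ _))
    exact absurd (hgγ _ (hW1lim.succ_lt hξs)) (hγle.trans h2).not_gt
  -- γ is a good point
  obtain ⟨v, hv1, hv2, n₀, hn₀, hgoodv⟩ := hgood γ hγlt hγcof
  -- choice functions into the image of b and into v
  have hBex : ∀ x : Ordinal.{u}, ∃ y, x < γ → (y ∈ bimage ∧ x < y ∧ y < γ) := by
    intro x
    by_cases hx : x < γ
    · obtain ⟨ξ, hξ, h⟩ := (Ordinal.lt_bsup _).1 hx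
      exact ⟨g ξ, fun _ => ⟨hgb ξ hξ, h, hgγ ξ hξ⟩⟩
    · exact ⟨0, fun h => absurd h hx⟩
  choose Bf hBf using hBex
  have hWex : ∀ x : Ordinal.{u}, ∃ y, x < γ → (y ∈ v ∧ x < y ∧ y < γ) := by
    intro x
    by_cases hx : x < γ
    · obtain ⟨α, hα, hxα⟩ := hv2 (Order.succ x) (hγlim.succ_lt hx)
      exact ⟨α, fun _ => ⟨hα, (Order.lt_succ x).trans_le hxα, hv1 hα⟩⟩
    · exact ⟨0, fun h => absurd h hx⟩
  choose Wf hWf using hWex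
  set stp : Ordinal.{u} → Ordinal.{u} := fun x => Wf (Bf x) with hstpdef
  set uu : Ordinal.{u} → Ordinal.{u} := seqU Wf stp with huudef
  have hstpγ : ∀ x, x < γ → (stp x ∈ v ∧ x < stp x ∧ stp x < γ) := by
    intro x hx
    obtain ⟨hB1, hB2, hB3⟩ := hBf x hx
    obtain ⟨hWa, hWb, hWc⟩ := hWf (Bf x) hB3
    exact ⟨hWa, hB2.trans hWb, hWc⟩
  have hu : ∀ ξ, ξ < W1 → (uu ξ ∈ v ∧ uu ξ < γ ∧ ∀ η, η < ξ → stp (uu η) < uu ξ) := by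
    intro ξ
    refine Ordinal.induction
      (p := fun ξ => ξ < W1 → (uu ξ ∈ v ∧ uu ξ < γ ∧ ∀ η, η < ξ → stp (uu η) < uu ξ))
      ξ ?_
    intro ξ IH hξ
    have hsb : Ordinal.bsup.{u,u} ξ (fun η _ => stp (uu η)) < γ := by
      refine Ordinal.bsup_lt_ord ?_ ?_
      · have h1 : ξ.card < Cardinal.aleph 1 := Cardinal.lt_ord.1 (hW1def ▸ hξ)
        have h2 : ξ.card ≤ Cardinal.aleph0 := by
          rwa [← Cardinal.succ_aleph0, Order.lt_succ_iff] at h1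
        exact h2.trans_lt hγcof
      · intro η hη
        exact (hstpγ (uu η) ((IH η hη (hη.trans hξ)).2.1)).2.2
    have hueq : uu ξ = Wf (Ordinal.bsup.{u,u} ξ fun η _ => stp (uu η)) := seqU_eq Wf stp ξ
    obtain ⟨hva, hltb, hγc⟩ := hWf _ hsb
    refine ⟨?_, ?_, ?_⟩
    · rw [hueq]; exact hva
    · rw [hueq]; exact hγc
    · intro η hη
      rw [hueq]
      exact (Ordinal.le_bsup _ η hη).trans_lt hltb
  set βo : Ordinal.{u} → Ordinal.{u} := fun ξ => Bf (uu ξ) with hβodef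
  set wo : Ordinal.{u} → Ordinal.{u} := fun ξ => stp (uu ξ) with hwodef
  have hβofacts : ∀ ξ, ξ < W1 → (βo ξ ∈ bimage ∧ uu ξ < βo ξ ∧ βo ξ < γ) :=
    fun ξ hξ => hBf _ (hu ξ hξ).2.1
  have hwofacts : ∀ ξ, ξ < W1 → (wo ξ ∈ v ∧ βo ξ < wo ξ ∧ wo ξ < γ) := by
    intro ξ hξ
    obtain ⟨hWa, hWb, hWc⟩ := hWf (Bf (uu ξ)) (hβofacts ξ hξ).2.2
    exact ⟨hWa, hWb, hWc⟩
  have hwu : ∀ ξ ζ, ξ < ζ → ζ < W1 → wo ξ < uu ζ :=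
    fun ξ ζ h hζ => (hu ζ hζ).2.2 ξ h
  have hβlt : ∀ ξ, ξ < W1 → βo ξ < (Order.succ μ).ord :=
    fun ξ hξ => (hβofacts ξ hξ).2.2.trans hγlt
  have hwlt2 : ∀ ξ, ξ < W1 → wo ξ < (Order.succ μ).ord :=
    fun ξ hξ => (hwofacts ξ hξ).2.2.trans hγlt
  -- bounds for the exceptional (finite) sets of coordinates
  have hd1ex : ∀ ξ : Ordinal.{u}, ∃ d, ξ < W1 → (d < Ordinal.omega0 ∧
      ∀ i, i < Ordinal.omega0 → f (βo ξ) i ≤ f (uu ξ) i → i < d) := by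
    intro ξ
    by_cases hξ : ξ < W1
    · have hmem : {i | i < Ordinal.omega0 ∧ f (βo ξ) i ≤ f (uu ξ) i} ∈
          (boundedIdeal Ordinal.omega0).sets :=
        hf.2.1 (uu ξ) (βo ξ) (hβofacts ξ hξ).2.1 (hβlt ξ hξ)
      obtain ⟨d, hdω, hdsub⟩ := hmem
      exact ⟨d, fun _ => ⟨hdω, fun i hiω hile => hdsub ⟨hiω, hile⟩⟩⟩
    · exact ⟨0, fun h => absurd h hξ⟩
  choose d1 hd1 using hd1ex
  have hd2ex : ∀ ξ : Ordinal.{u}, ∃ d, ξ < W1 → (d < Ordinal.omega0 ∧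
      ∀ i, i < Ordinal.omega0 → f (wo ξ) i ≤ f (βo ξ) i → i < d) := by
    intro ξ
    by_cases hξ : ξ < W1
    · have hmem : {i | i < Ordinal.omega0 ∧ f (wo ξ) i ≤ f (βo ξ) i} ∈
          (boundedIdeal Ordinal.omega0).sets :=
        hf.2.1 (βo ξ) (wo ξ) (hwofacts ξ hξ).2.1 (hwlt2 ξ hξ)
      obtain ⟨d, hdω, hdsub⟩ := hmem
      exact ⟨d, fun _ => ⟨hdω, fun i hiω hile => hdsub ⟨hiω, hile⟩⟩⟩
    · exact ⟨0, fun h => absurd h hξ⟩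
  choose d2 hd2 using hd2ex
  -- a single coordinate works for uncountably many indices
  have hMex : ∀ ξ : Ordinal.{u}, ∃ n : ℕ, ξ < W1 →
      max (max n₀ (d1 ξ)) (d2 ξ) = (n : Ordinal) := by
    intro ξ
    by_cases hξ : ξ < W1
    · have hlt : max (max n₀ (d1 ξ)) (d2 ξ) < Ordinal.omega0 :=
        max_lt (max_lt hn₀ (hd1 ξ hξ).1) (hd2 ξ hξ).1
      obtain ⟨n, hn⟩ := Ordinal.lt_omega0.1 hlt
      exact ⟨n, fun _ => hn⟩
    · exact ⟨0, fun h => absurd h hξ⟩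
  choose Mn hMn using hMex
  have hW1big : ¬ (Set.Iio W1).Countable := by
    rw [Cardinal.countable_iff_lt_aleph_one, hIiocard, Cardinal.lift_aleph,
      Ordinal.lift_one]
    exact lt_irrefl _
  have hnc : ∃ n : ℕ, ¬ (Set.Iio W1 ∩ {ξ | Mn ξ = n}).Countable := by
    by_contra hall
    push_neg at hall
    have hcover : Set.Iio W1 ⊆ ⋃ n : ℕ, (Set.Iio W1 ∩ {ξ | Mn ξ = n}) :=
      fun ξ hξ => Set.mem_iUnion.2 ⟨Mn ξ, hξ, rfl⟩
    exact hW1big (Set.Countable.mono hcover (Set.countable_iUnion hall))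
  obtain ⟨N, hN⟩ := hnc
  set T : Set Ordinal.{u} := Set.Iio W1 ∩ {ξ | Mn ξ = N} with hTdef
  have hTW : ∀ ξ ∈ T, ξ < W1 := fun ξ h => h.1
  have hTne : T.Nonempty := by
    rcases Set.eq_empty_or_nonempty T with he | hne
    · rw [he] at hN
      exact absurd Set.countable_empty hN
    · exact hne
  have hMeq : ∀ ξ ∈ T, max (max n₀ (d1 ξ)) (d2 ξ) = ((N : ℕ) : Ordinal) := by
    intro ξ hξ
    rw [hMn ξ hξ.1, hξ.2]
  have hn₀N : n₀ ≤ ((N : ℕ) : Ordinal) := by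
    obtain ⟨ξ₀, hξ₀⟩ := hTne
    rw [← hMeq ξ₀ hξ₀]
    exact (le_max_left _ _).trans (le_max_left _ _)
  have hfu : ∀ ξ ∈ T, f (uu ξ) ((N : ℕ) : Ordinal) < f (βo ξ) ((N : ℕ) : Ordinal) := by
    intro ξ hξT
    by_contra hnot
    push_neg at hnot
    have hlt := (hd1 ξ (hTW ξ hξT)).2 ((N : ℕ) : Ordinal) (Ordinal.nat_lt_omega0 N) hnot
    have hle : d1 ξ ≤ ((N : ℕ) : Ordinal) := by
      rw [← hMeq ξ hξT]
      exact (le_max_right _ _).trans (le_max_left _ _)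
    exact absurd hlt hle.not_gt
  have hfw : ∀ ξ ∈ T, f (βo ξ) ((N : ℕ) : Ordinal) < f (wo ξ) ((N : ℕ) : Ordinal) := by
    intro ξ hξT
    by_contra hnot
    push_neg at hnot
    have hlt := (hd2 ξ (hTW ξ hξT)).2 ((N : ℕ) : Ordinal) (Ordinal.nat_lt_omega0 N) hnot
    have hle : d2 ξ ≤ ((N : ℕ) : Ordinal) := by
      rw [← hMeq ξ hξT]
      exact le_max_right _ _
    exact absurd hlt hle.not_gt
  have hval : ∀ ξ ∈ T, ∀ ζ ∈ T, ξ < ζ →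
      f (βo ξ) ((N : ℕ) : Ordinal) < f (βo ζ) ((N : ℕ) : Ordinal) := by
    intro ξ hξ ζ hζ h
    have h1 := hfw ξ hξ
    have h2 : f (wo ξ) ((N : ℕ) : Ordinal) < f (uu ζ) ((N : ℕ) : Ordinal) :=
      hgoodv ((N : ℕ) : Ordinal) hn₀N (Ordinal.nat_lt_omega0 N)
        (wo ξ) (hwofacts ξ (hTW ξ hξ)).1 (uu ζ) (hu ζ (hTW ζ hζ)).1
        (hwu ξ ζ h (hTW ζ hζ))
    exact h1.trans (h2.trans (hfu ζ hζ))
  -- an injective enumeration of T by Iio ω₁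
  have hTcard : #(↥(Set.Iio W1)) = #(↥T) := by
    apply le_antisymm
    · rw [hIiocard, Cardinal.lift_aleph, Ordinal.lift_one]
      exact not_lt.1 fun h => hN ((Cardinal.countable_iff_lt_aleph_one T).2 h)
    · exact Cardinal.mk_le_mk_of_subset Set.inter_subset_left
  obtain ⟨E⟩ := Cardinal.eq.1 hTcard
  set b' : Ordinal.{u} → Ordinal.{u} := fun ρ =>
    if h : ρ ∈ Set.Iio W1 then f (βo ((E ⟨ρ, h⟩ : ↥T) : Ordinal)) ((N : ℕ) : Ordinal)
    else 0 with hb'def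
  have hb'lt : ∀ ρ, ρ < W1 → b' ρ < (Order.succ (μs ((N : ℕ) : Ordinal))).ord := by
    intro ρ hρ
    have hρ' : ρ ∈ Set.Iio W1 := hρ
    rw [hb'def]
    simp only [dif_pos hρ']
    exact hford _ (hβlt _ (hTW _ (E ⟨ρ, hρ'⟩).2)) _ (Ordinal.nat_lt_omega0 N)
  refine (hCfam ((N : ℕ) : Ordinal) (Ordinal.nat_lt_omega0 N)).2 ⟨b', ?_, ?_, ?_⟩
  · exact hb'lt
  · intro ρ1 h1 ρ2 h2 heq
    rw [hb'def] at heq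
    simp only [dif_pos h1, dif_pos h2] at heq
    have heq' : ((E ⟨ρ1, h1⟩ : ↥T) : Ordinal) = ((E ⟨ρ2, h2⟩ : ↥T) : Ordinal) := by
      by_contra hne
      rcases Ne.lt_or_gt hne with hlt | hlt
      · exact absurd heq (hval _ (E ⟨ρ1, h1⟩).2 _ (E ⟨ρ2, h2⟩).2 hlt).ne
      · exact absurd heq.symm (hval _ (E ⟨ρ2, h2⟩).2 _ (E ⟨ρ1, h1⟩).2 hlt).ne
    have hEeq : E ⟨ρ1, h1⟩ = E ⟨ρ2, h2⟩ := Subtype.ext heq'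
    have := E.injective hEeq
    exact congrArg Subtype.val this
  · refine isClubIn_biInter_of_club_subset ⟨0, Set.mem_Iio.2 hW1lim.pos⟩ ?_ hb3 ?_
    · intro ρ hρ
      exact (hCfam ((N : ℕ) : Ordinal) (Ordinal.nat_lt_omega0 N)).1 _ (hb'lt ρ hρ)
    · intro ρ hρ x hx
      have hρ' : ρ ∈ Set.Iio W1 := hρ
      have hT2 := (E ⟨ρ, hρ'⟩).2
      obtain ⟨β₀, hβ₀, hbeq⟩ := (hβofacts _ (hTW _ hT2)).1
      have hxD : x ∈ D (b β₀) := Set.mem_iInter₂.1 hx β₀ hβ₀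
      rw [hbeq] at hxD
      have hxC := Set.mem_iInter₂.1 hxD ((N : ℕ) : Ordinal) (Ordinal.nat_lt_omega0 N)
      rw [hb'def]
      simp only [dif_pos hρ']
      exact hxC
end
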